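/- Let H = (A,B,E) be a bipartite graph, q ≥ 2, and let c be a uniformly random proper coloring of H with q colors. If u and v are two distinct vertices in the same part (both in A or both in B), then P(c(u) = c(v)) ≥ 1/q. -/

import Mathlib

open SimpleGraph

/-- Number of proper colorings of a graph with q colors. -/
noncomputable def chrom {V : Type*} (H : SimpleGraph V) (q : ℕ) : ℕ :=
  Nat.card {c : V → Fin q // ∀ a b, H.Adj a b → c a ≠ c b}

section Aux
open Classical

variable {V : Type*} {q : ℕ}

/-- Kempe subgraph: edges of `H` whose endpoints are colored `i` or `j`. -/
def KG (H : SimpleGraph V) (c : V → Fin q) (i j : Fin q) : SimpleGraph V where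
  Adj a b := H.Adj a b ∧ (c a = i ∨ c a = j) ∧ (c b = i ∨ c b = j)
  symm := ⟨by rintro a b ⟨h1, h2, h3⟩; exact ⟨h1.symm, h3, h2⟩⟩
  loopless := ⟨by rintro a ⟨h1, _⟩; exact H.ne_of_adj h1 rfl⟩

@[simp] lemma KG_adj (H : SimpleGraph V) (c : V → Fin q) (i j : Fin q) (a b : V) :
    (KG H c i j).Adj a b ↔ H.Adj a b ∧ (c a = i ∨ c a = j) ∧ (c b = i ∨ c b = j) := Iff.rfl

/-- Swap colors i,j on the Kempe component of v. -/
noncomputable def kmap (H : SimpleGraph V) (v : V) (i j : Fin q) (c : V → Fin q) : V → Fin q :=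
  fun w => if (KG H c i j).Reachable v w then Equiv.swap i j (c w) else c w

lemma swap_mem {i j x : Fin q} :
    (Equiv.swap i j x = i ∨ Equiv.swap i j x = j) ↔ (x = i ∨ x = j) := by
  rcases eq_or_ne x i with h | h
  · simp [h]
  rcases eq_or_ne x j with h2 | h2
  · simp [h2]
  · simp [Equiv.swap_apply_of_ne_of_ne h h2, h, h2]

lemma kmap_mem (H : SimpleGraph V) (v : V) (i j : Fin q) (c : V → Fin q) (w : V) :
    (kmap H v i j c w = i ∨ kmap H v i j c w = j) ↔ (c w = i ∨ c w = j) := by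
  unfold kmap
  split_ifs
  · exact swap_mem
  · exact Iff.rfl

lemma KG_kmap (H : SimpleGraph V) (v : V) (i j : Fin q) (c : V → Fin q) :
    KG H (kmap H v i j c) i j = KG H c i j := by
  ext a b
  simp only [KG_adj, kmap_mem]

lemma kmap_invol (H : SimpleGraph V) (v : V) (i j : Fin q) (c : V → Fin q) :
    kmap H v i j (kmap H v i j c) = c := by
  funext w
  conv_lhs => rw [kmap, KG_kmap]
  split_ifs with h
  · rw [kmap, if_pos h, Equiv.swap_apply_self]
  · rw [kmap, if_neg h]

lemma reach_color (H : SimpleGraph V) (c : V → Fin q) (i j : Fin q) {v w : V}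
    (hv : c v = i ∨ c v = j) (h : (KG H c i j).Reachable v w) : c w = i ∨ c w = j := by
  obtain ⟨p⟩ := h
  induction p with
  | nil => exact hv
  | cons h p ih => exact ih h.2.2

lemma parity (H : SimpleGraph V) (A : Set V)
    (hbip : ∀ a b, H.Adj a b → (a ∈ A ↔ b ∉ A)) (c : V → Fin q)
    (hP : ∀ a b, H.Adj a b → c a ≠ c b) (i j : Fin q) (hij : i ≠ j) (v : V)
    {a w : V} (p : (KG H c i j).Walk a w)
    (ha : c a = j ↔ (a ∈ A ↔ v ∈ A)) : c w = j ↔ (w ∈ A ↔ v ∈ A) := by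
  induction p with
  | nil => exact ha
  | @cons x y w h p ih =>
    apply ih
    obtain ⟨hxy, hx, hy⟩ := h
    have hne := hP x y hxy
    have hside := hbip x y hxy
    have hcases : (c x = i ∧ c y = j) ∨ (c x = j ∧ c y = i) := by
      rcases hx with hx | hx <;> rcases hy with hy | hy <;> simp_all
    rcases hcases with ⟨h1, h2⟩ | ⟨h1, h2⟩
    · rw [h2]
      rw [h1] at ha
      have hx' : ¬(x ∈ A ↔ v ∈ A) := fun hh => hij (ha.mpr hh)
      simp only [true_iff]
      tauto
    · rw [h2]
      rw [h1] at ha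
      simp only [true_iff] at ha
      simp only [hij, false_iff]
      tauto

lemma kmap_pos {H : SimpleGraph V} {v : V} {i j : Fin q} {c : V → Fin q} {w : V}
    (h : (KG H c i j).Reachable v w) : kmap H v i j c w = Equiv.swap i j (c w) := by
  simp only [kmap]; rw [if_pos h]

lemma kmap_neg {H : SimpleGraph V} {v : V} {i j : Fin q} {c : V → Fin q} {w : V}
    (h : ¬ (KG H c i j).Reachable v w) : kmap H v i j c w = c w := by
  simp only [kmap]; rw [if_neg h]

lemma kempe [Fintype V] (H : SimpleGraph V) (A : Set V)
    (hbip : ∀ a b, H.Adj a b → (a ∈ A ↔ b ∉ A))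
    (u v : V) (hsame : u ∈ A ↔ v ∈ A) (i j : Fin q) (hij : i ≠ j) :
    (Finset.univ.filter fun c : V → Fin q =>
        (∀ a b, H.Adj a b → c a ≠ c b) ∧ c u = i ∧ c v = j).card ≤
    (Finset.univ.filter fun c : V → Fin q =>
        (∀ a b, H.Adj a b → c a ≠ c b) ∧ c u = i ∧ c v = i).card := by
  classical
  apply Finset.card_le_card_of_injOn (kmap H v i j)
  · rintro c hc
    simp only [Finset.mem_coe, Finset.mem_filter, Finset.mem_univ, true_and] at hc ⊢
    obtain ⟨hP, hcu, hcv⟩ := hc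
    have hvmem : c v = i ∨ c v = j := Or.inr hcv
    have hnotu : ¬ (KG H c i j).Reachable v u := by
      intro hr
      obtain ⟨p⟩ := hr
      have := parity H A hbip c hP i j hij v p (by simp [hcv])
      rw [hcu] at this
      exact hij (this.mpr (by tauto))
    refine ⟨?_, ?_, ?_⟩
    · intro a b hab
      by_cases ra : (KG H c i j).Reachable v a <;>
        by_cases rb : (KG H c i j).Reachable v b
      · rw [kmap_pos ra, kmap_pos rb]
        exact fun hh => hP a b hab (Equiv.injective _ hh)
      · have hca := reach_color H c i j hvmem ra
        have hcb : ¬ (c b = i ∨ c b = j) := fun hcb =>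
          rb (ra.trans (SimpleGraph.Adj.reachable ⟨hab, hca, hcb⟩))
        rw [kmap_pos ra, kmap_neg rb]
        intro hh
        exact hcb (hh ▸ swap_mem.mpr hca)
      · have hcb := reach_color H c i j hvmem rb
        have hca : ¬ (c a = i ∨ c a = j) := fun hca =>
          ra (rb.trans (SimpleGraph.Adj.reachable ⟨hab.symm, hcb, hca⟩))
        rw [kmap_neg ra, kmap_pos rb]
        intro hh
        exact hca (hh ▸ swap_mem.mpr hcb)
      · rw [kmap_neg ra, kmap_neg rb]
        exact hP a b hab
    · rw [kmap_neg hnotu]; exact hcu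
    · rw [kmap_pos (SimpleGraph.Reachable.refl v), hcv, Equiv.swap_apply_right]
  · intro c1 _ c2 _ heq
    have := congrArg (kmap H v i j) heq
    rwa [kmap_invol, kmap_invol] at this

end Aux

theorem stmt_10 {V : Type*} [Fintype V] (H : SimpleGraph V) (A : Set V)
    (hbip : ∀ a b, H.Adj a b → (a ∈ A ↔ b ∉ A)) (q : ℕ) (hq : 2 ≤ q)
    (u v : V) (hsame : u ∈ A ↔ v ∈ A) (huv : u ≠ v) :
    (Nat.card {c : V → Fin q // (∀ a b, H.Adj a b → c a ≠ c b) ∧ c u = c v} : ℝ) /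
      (chrom H q : ℝ) ≥ 1 / q := by
  classical
  set P : (V → Fin q) → Prop := fun c => ∀ a b, H.Adj a b → c a ≠ c b with hPdef
  set F : Finset (V → Fin q) := Finset.univ.filter P with hFdef
  set E : Finset (V → Fin q) := Finset.univ.filter (fun c => P c ∧ c u = c v) with hEdef
  have hnum : Nat.card {c : V → Fin q // P c ∧ c u = c v} = E.card := by
    rw [Nat.card_eq_fintype_card, Fintype.card_subtype]
  have hden : chrom H q = F.card := by
    rw [chrom, Nat.card_eq_fintype_card, Fintype.card_subtype]
  have hFsum : F.card = ∑ p : Fin q × Fin q,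
      (Finset.univ.filter fun c : V → Fin q => P c ∧ c u = p.1 ∧ c v = p.2).card := by
    rw [Finset.card_eq_sum_card_fiberwise (f := fun c => (c u, c v)) (t := Finset.univ)
      (fun c _ => Finset.mem_univ _)]
    apply Finset.sum_congr rfl
    intro p _
    rw [hFdef, Finset.filter_filter]
    congr 1
    apply Finset.filter_congr
    intro c _
    constructor
    · rintro ⟨h1, h2⟩; exact ⟨h1, congrArg Prod.fst h2, congrArg Prod.snd h2⟩
    · rintro ⟨h1, h2, h3⟩; exact ⟨h1, Prod.ext h2 h3⟩
  have hEsum : E.card = ∑ i : Fin q,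
      (Finset.univ.filter fun c : V → Fin q => P c ∧ c u = i ∧ c v = i).card := by
    rw [Finset.card_eq_sum_card_fiberwise (f := fun c => c u) (t := Finset.univ)
      (fun c _ => Finset.mem_univ _)]
    apply Finset.sum_congr rfl
    intro i _
    rw [hEdef, Finset.filter_filter]
    congr 1
    apply Finset.filter_congr
    intro c _
    constructor
    · rintro ⟨⟨h1, h2⟩, h3⟩; exact ⟨h1, h3, h2.symm.trans h3⟩
    · rintro ⟨h1, h2, h3⟩; exact ⟨⟨h1, h2.trans h3.symm⟩, h2⟩
  have hle : F.card ≤ q * E.card := by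
    rw [hFsum, hEsum, Fintype.sum_prod_type, Finset.mul_sum]
    apply Finset.sum_le_sum
    intro i _
    have : ∀ j : Fin q,
        (Finset.univ.filter fun c : V → Fin q => P c ∧ c u = i ∧ c v = j).card ≤
        (Finset.univ.filter fun c : V → Fin q => P c ∧ c u = i ∧ c v = i).card := by
      intro j
      by_cases h : j = i
      · subst h; exact le_refl _
      · exact kempe H A hbip u v hsame i j (fun hh => h hh.symm)
    calc ∑ j : Fin q, (Finset.univ.filter fun c : V → Fin q => P c ∧ c u = i ∧ c v = j).card
        ≤ ∑ _j : Fin q, (Finset.univ.filter fun c : V → Fin q => P c ∧ c u = i ∧ c v = i).card :=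
          Finset.sum_le_sum (fun j _ => this j)
      _ = q * (Finset.univ.filter fun c : V → Fin q => P c ∧ c u = i ∧ c v = i).card := by
          simp [Finset.sum_const, Finset.card_univ]
  have hpos : 0 < F.card := by
    apply Finset.card_pos.mpr
    have h0 : 0 < q := Nat.lt_of_lt_of_le Nat.zero_lt_two hq
    have h1 : 1 < q := Nat.lt_of_lt_of_le Nat.one_lt_two hq
    refine ⟨fun x => if x ∈ A then ⟨0, h0⟩ else ⟨1, h1⟩, ?_⟩
    simp only [hFdef, Finset.mem_filter, Finset.mem_univ, true_and]
    intro a b hab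
    have := hbip a b hab
    by_cases ha : a ∈ A <;> by_cases hb : b ∈ A <;> simp_all [Fin.ext_iff]
  have hq0 : (0 : ℝ) < q := by exact_mod_cast Nat.lt_of_lt_of_le Nat.zero_lt_two hq
  have hF0 : (0 : ℝ) < F.card := by exact_mod_cast hpos
  rw [hnum, hden, ge_iff_le, div_le_div_iff₀ hq0 hF0]
  have hle' : (F.card : ℝ) ≤ q * E.card := by exact_mod_cast hle
  linarith
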